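/- Let d ≥ 1, let q ≥ 1, and let (A_n)_{n≥0} be a q-periodic sequence of linear operators on ℂ^d (i.e. A_{n+q} = A_n for all n ≥ 0) such that the spectrum of the product A_{q−1}⋯A_1 A_0 does not intersect the unit circle {z ∈ ℂ : |z| = 1}. Then the system x_{n+1} = A_n x_n, n ≥ 0, has the ℓ^∞-shadowing property: for every ε > 0 there exists δ > 0 such that every sequence (y_n)_{n≥0} ⊂ ℂ^d with sup_{n≥0} ‖y_{n+1} − A_n y_n‖ ≤ δ admits a sequence (x_n)_{n≥0} with x_{n+1} = A_n x_n for all n ≥ 0 and sup_{n≥0} ‖x_n − y_n‖ ≤ ε. -/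

import Mathlib

open Filter Topology Module
open scoped ENNReal NNReal

open scoped ENNReal NNReal

lemma geom_decay {A : Type*} [NormedRing A] [NormedAlgebra ℂ A] [CompleteSpace A]
    [NormOneClass A] [Nontrivial A] (T : A)
    (h : ∀ z ∈ spectrum ℂ T, ‖z‖ < 1) :
    ∃ C r : ℝ, 1 ≤ C ∧ 0 < r ∧ r < 1 ∧ ∀ n : ℕ, ‖T ^ n‖ ≤ C * r ^ n := by
  have hsr : spectralRadius ℂ T < 1 := by
    have := spectrum.spectralRadius_lt_of_forall_lt T (r := 1)
      (fun z hz => by simpa [← NNReal.coe_lt_coe] using h z hz)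
    simpa using this
  obtain ⟨r, hr1, hr2⟩ := ENNReal.lt_iff_exists_nnreal_btwn.mp hsr
  have hrpos : 0 < r := by
    rcases (zero_le : (0 : ℝ≥0) ≤ r).lt_or_eq with h' | h'
    · exact h'
    · exfalso; rw [← h'] at hr1; simp at hr1
  have hr2' : (r : ℝ) < 1 := by exact_mod_cast hr2
  -- Gelfand's formula: eventually ‖T^n‖₊ ^ (1/n) < r
  have hev : ∀ᶠ n : ℕ in atTop,
      ((‖T ^ n‖₊ : ℝ≥0∞) ^ (1 / (n : ℝ))) < (r : ℝ≥0∞) := by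
    exact (spectrum.pow_nnnorm_pow_one_div_tendsto_nhds_spectralRadius T).eventually_lt_const hr1
  obtain ⟨M, hM⟩ := (hev.and (eventually_ge_atTop 1)).exists_forall_of_atTop
  have key : ∀ n, M ≤ n → ‖T ^ n‖ ≤ (r : ℝ) ^ n := by
    intro n hn
    obtain ⟨h1, h2⟩ := hM n hn
    have hn0 : (0 : ℝ) < (n : ℝ) := by exact_mod_cast h2
    have := ENNReal.rpow_lt_rpow h1 hn0
    rw [← ENNReal.rpow_mul, one_div, inv_mul_cancel₀ (ne_of_gt hn0), ENNReal.rpow_one,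
      ENNReal.rpow_natCast] at this
    have : ‖T ^ n‖₊ < r ^ n := by exact_mod_cast this
    have : ‖T ^ n‖ < (r : ℝ) ^ n := by exact_mod_cast this
    exact this.le
  have hsum : 0 ≤ ∑ k ∈ Finset.range (M + 1), ‖T ^ k‖ / (r : ℝ) ^ k :=
    Finset.sum_nonneg fun k _ => div_nonneg (norm_nonneg _) (by positivity)
  refine ⟨(∑ k ∈ Finset.range (M + 1), ‖T ^ k‖ / (r : ℝ) ^ k) + 1, r, by linarith, hrpos, hr2',
    ?_⟩
  · intro n
    rcases le_or_gt M n with hn | hn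
    · calc ‖T ^ n‖ ≤ (r : ℝ) ^ n := key n hn
        _ = 1 * (r : ℝ) ^ n := (one_mul _).symm
        _ ≤ _ * (r : ℝ) ^ n := by
            apply mul_le_mul_of_nonneg_right _ (by positivity)
            linarith
    · have hmem : n ∈ Finset.range (M + 1) := Finset.mem_range.mpr (by omega)
      have hle : ‖T ^ n‖ / (r : ℝ) ^ n ≤
          ∑ k ∈ Finset.range (M + 1), ‖T ^ k‖ / (r : ℝ) ^ k :=
        Finset.single_le_sum
          (fun k _ => div_nonneg (norm_nonneg _) (by positivity)) hmem
      have hrn : (0 : ℝ) < (r : ℝ) ^ n := by positivity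
      rw [div_le_iff₀ hrn] at hle
      nlinarith [pow_pos (show (0:ℝ) < r from hrpos) n]

lemma shadow_core {E : Type*} [NormedAddCommGroup E] [NormedSpace ℂ E] [CompleteSpace E]
    (B P N : E →L[ℂ] E)
    (hBN : ∀ x, B (N x) = x - P x)
    (hPN : ∀ x, P (N x) = 0)
    (C r : ℝ) (hC : 0 ≤ C) (hr0 : 0 ≤ r) (hr1 : r < 1)
    (hs : ∀ (j : ℕ) (x : E), ‖(B ^ j) (P x)‖ ≤ C * r ^ j * ‖x‖)
    (hu : ∀ (j : ℕ) (x : E), ‖(N ^ (j + 1)) x‖ ≤ C * r ^ (j + 1) * ‖x‖)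
    (δ : ℝ) (G : ℕ → E) (hG : ∀ m, ‖G m‖ ≤ δ) :
    ∃ e : ℕ → E, (∀ m, e (m + 1) = B (e m) - G m) ∧
      ∀ m, ‖e m‖ ≤ 2 * C / (1 - r) * δ := by
  have hδ : 0 ≤ δ := le_trans (norm_nonneg _) (hG 0)
  have hgeo : Summable fun j : ℕ => r ^ j := summable_geometric_of_lt_one hr0 hr1
  have htsum : ∑' j : ℕ, r ^ j = (1 - r)⁻¹ := tsum_geometric_of_lt_one hr0 hr1
  have hnormb : ∀ (m j : ℕ), ‖(N ^ (j + 1)) (G (m + j))‖ ≤ C * δ * r ^ (j + 1) := by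
    intro m j
    calc ‖(N ^ (j + 1)) (G (m + j))‖ ≤ C * r ^ (j + 1) * ‖G (m + j)‖ := hu j _
      _ ≤ C * r ^ (j + 1) * δ := mul_le_mul_of_nonneg_left (hG _) (by positivity)
      _ = C * δ * r ^ (j + 1) := by ring
  have hsumm : ∀ m : ℕ, Summable fun j : ℕ => (N ^ (j + 1)) (G (m + j)) := by
    intro m
    apply Summable.of_norm_bounded (g := fun j : ℕ => (C * δ) * r ^ (j + 1))
    · exact ((hgeo.mul_left r).mul_left (C * δ)).congr (by intro j; ring)
    · exact hnormb m
  set u : ℕ → E := fun m => ∑' j : ℕ, (N ^ (j + 1)) (G (m + j)) with hu_def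
  set s : ℕ → E := fun m => -∑ k ∈ Finset.range m, (B ^ (m - 1 - k)) (P (G k)) with hs_def
  have hpow : ∀ (j : ℕ) (z : E), B ((B ^ j) z) = (B ^ (j + 1)) z := by
    intro j z
    rw [pow_succ']
    rfl
  have hNpow : ∀ (j : ℕ) (z : E), (N ^ (j + 1)) z = N ((N ^ j) z) := by
    intro j z
    rw [pow_succ']
    rfl
  have hsrec : ∀ m, s (m + 1) = B (s m) - P (G m) := by
    intro m
    simp only [hs_def]
    rw [Finset.sum_range_succ, map_neg, map_sum]
    have : ∀ k ∈ Finset.range m,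
        B ((B ^ (m - 1 - k)) (P (G k))) = (B ^ (m + 1 - 1 - k)) (P (G k)) := by
      intro k hk
      have hk' := Finset.mem_range.mp hk
      rw [hpow]
      congr 2
      omega
    rw [Finset.sum_congr rfl this]
    simp [pow_zero]
    abel
  have hurec : ∀ m, u (m + 1) = B (u m) - (G m - P (G m)) := by
    intro m
    have h1 : B (u m) = ∑' j : ℕ, B ((N ^ (j + 1)) (G (m + j))) :=
      (B : E →L[ℂ] E).map_tsum (hsumm m)
    have h2 : ∀ j : ℕ, B ((N ^ (j + 1)) (G (m + j))) =
        (N ^ j) (G (m + j)) - P ((N ^ j) (G (m + j))) := by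
      intro j
      rw [hNpow, hBN]
    set h : ℕ → E := fun j => (N ^ j) (G (m + j)) - P ((N ^ j) (G (m + j))) with hh
    have hsh : Summable h := by
      apply (summable_nat_add_iff 1).mp
      have : (fun j : ℕ => h (j + 1)) = fun j : ℕ => (N ^ (j + 1)) (G (m + 1 + j)) := by
        funext j
        simp only [hh]
        have harg : m + (j + 1) = m + 1 + j := by omega
        rw [harg, hNpow, hPN, sub_zero]
      rw [this]
      exact hsumm (m + 1)
    have h3 : B (u m) = ∑' j, h j := by
      rw [h1]
      exact tsum_congr h2
    have h4 : ∑' j, h j = h 0 + ∑' j, h (j + 1) := Summable.tsum_eq_zero_add hsh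
    have h5 : (fun j : ℕ => h (j + 1)) = fun j : ℕ => (N ^ (j + 1)) (G (m + 1 + j)) := by
      funext j
      simp only [hh]
      have harg : m + (j + 1) = m + 1 + j := by omega
      rw [harg, hNpow, hPN, sub_zero]
    have h6 : h 0 = G m - P (G m) := by
      simp [hh]
    rw [h3, h4, h5, h6]
    simp only [hu_def]
    abel
  refine ⟨fun m => s m + u m, ?_, ?_⟩
  · intro m
    show s (m + 1) + u (m + 1) = B (s m + u m) - G m
    rw [hsrec, hurec, map_add]
    abel
  · intro m
    have hsb : ‖s m‖ ≤ C * δ * (1 - r)⁻¹ := by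
      have h1 : ‖s m‖ ≤ ∑ k ∈ Finset.range m, C * δ * r ^ (m - 1 - k) := by
        simp only [hs_def]
        rw [norm_neg]
        refine le_trans (norm_sum_le _ _) (Finset.sum_le_sum fun k hk => ?_)
        calc ‖(B ^ (m - 1 - k)) (P (G k))‖ ≤ C * r ^ (m - 1 - k) * ‖G k‖ := hs _ _
          _ ≤ C * r ^ (m - 1 - k) * δ := mul_le_mul_of_nonneg_left (hG _) (by positivity)
          _ = C * δ * r ^ (m - 1 - k) := by ring
      have h2 : ∑ k ∈ Finset.range m, C * δ * r ^ (m - 1 - k)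
          = C * δ * ∑ k ∈ Finset.range m, r ^ (m - 1 - k) := by
        rw [Finset.mul_sum]
      have h3 : ∑ k ∈ Finset.range m, r ^ (m - 1 - k) = ∑ k ∈ Finset.range m, r ^ k :=
        Finset.sum_range_reflect (fun j => r ^ j) m
      have h4 : ∑ k ∈ Finset.range m, r ^ k ≤ (1 - r)⁻¹ := by
        rw [← htsum]
        exact Summable.sum_le_tsum _ (fun i _ => by positivity) hgeo
      calc ‖s m‖ ≤ ∑ k ∈ Finset.range m, C * δ * r ^ (m - 1 - k) := h1
        _ = C * δ * ∑ k ∈ Finset.range m, r ^ (m - 1 - k) := h2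
        _ ≤ C * δ * (1 - r)⁻¹ := by
            rw [h3] at h2 ⊢
            exact mul_le_mul_of_nonneg_left h4 (by positivity)
    have hub : ‖u m‖ ≤ C * δ * (1 - r)⁻¹ := by
      have h1 : ‖u m‖ ≤ ∑' j : ℕ, (C * δ) * r ^ (j + 1) := by
        refine le_trans (norm_tsum_le_tsum_norm ?_) (Summable.tsum_le_tsum (hnormb m) ?_ ?_)
        · apply Summable.of_nonneg_of_le (fun j => norm_nonneg _) (hnormb m)
          exact ((hgeo.mul_left r).mul_left (C * δ)).congr (by intro j; ring)
        · apply Summable.of_nonneg_of_le (fun j => norm_nonneg _) (hnormb m)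
          exact ((hgeo.mul_left r).mul_left (C * δ)).congr (by intro j; ring)
        · exact ((hgeo.mul_left r).mul_left (C * δ)).congr (by intro j; ring)
      have h2 : ∑' j : ℕ, (C * δ) * r ^ (j + 1) = (C * δ * r) * (1 - r)⁻¹ := by
        rw [← htsum]
        rw [← tsum_mul_left]
        exact tsum_congr fun j => by ring
      have h3 : (C * δ * r) * (1 - r)⁻¹ ≤ C * δ * (1 - r)⁻¹ := by
        have hinv : 0 ≤ (1 - r)⁻¹ := le_of_lt (inv_pos.mpr (by linarith))
        have : C * δ * r ≤ C * δ := by nlinarith [mul_nonneg hC hδ]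
        exact mul_le_mul_of_nonneg_right this hinv
      linarith [h1, h2.le]
    calc ‖s m + u m‖ ≤ ‖s m‖ + ‖u m‖ := norm_add_le _ _
      _ ≤ 2 * (C * δ * (1 - r)⁻¹) := by linarith
      _ = 2 * C / (1 - r) * δ := by
          field_simp
lemma disjoint_finsup {ι : Type*} {α : Type*} [CompleteLattice α] [IsModularLattice α] {G : ι → α}
    (h : iSupIndep G) (s t : Finset ι) (hst : ∀ μ ∈ s, μ ∉ t) :
    Disjoint (s.sup G) (t.sup G) := by
  classical
  revert hst
  induction s using Finset.induction_on with
  | empty =>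
    intro _
    rw [Finset.sup_empty]
    exact disjoint_bot_left
  | @insert a s' ha ih =>
    intro hst
    rw [Finset.sup_insert]
    have h2 : Disjoint (s'.sup G) (t.sup G) :=
      ih fun μ hμ => hst μ (Finset.mem_insert_of_mem hμ)
    have ha' : a ∉ ((s' ∪ t : Finset ι) : Set ι) := by
      simp only [Finset.coe_union, Set.mem_union, Finset.mem_coe]
      rintro (h' | h')
      · exact ha h'
      · exact hst a (Finset.mem_insert_self a s') h'
    have h1 := h.disjoint_biSup (y := ((s' ∪ t : Finset ι) : Set ι)) ha'
    have h1' : Disjoint (G a) ((s' ∪ t).sup G) := by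
      rw [Finset.sup_eq_iSup]
      simpa using h1
    rw [Finset.sup_union] at h1'
    exact h2.disjoint_sup_left_of_disjoint_sup_right h1'

section Spec

variable {V : Type*} [NormedAddCommGroup V] [NormedSpace ℂ V] [CompleteSpace V]

lemma clm_end_spectrum_eq [FiniteDimensional ℂ V] (T : V →L[ℂ] V) :
    spectrum ℂ ((T : V →ₗ[ℂ] V)) = spectrum ℂ T := by
  have h2 := AlgEquiv.spectrum_eq (Module.End.toContinuousLinearMap V (𝕜 := ℂ))
    (T : V →ₗ[ℂ] V)
  rw [show (Module.End.toContinuousLinearMap V (𝕜 := ℂ)) (T : V →ₗ[ℂ] V) = T from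
    ContinuousLinearMap.coe_injective rfl] at h2
  exact h2.symm

lemma clm_spec_eigenvector [FiniteDimensional ℂ V] (T : V →L[ℂ] V) {z : ℂ}
    (hz : z ∈ spectrum ℂ T) : ∃ v : V, v ≠ 0 ∧ T v = z • v := by
  rw [← clm_end_spectrum_eq T] at hz
  obtain ⟨v, hv1, hv2⟩ :=
    (Module.End.HasUnifEigenvalue.of_mem_spectrum hz).exists_hasUnifEigenvector
  exact ⟨v, hv2, Module.End.mem_genEigenspace_one.mp hv1⟩

end Spec

set_option maxHeartbeats 2000000 in
lemma hyperbolic_package (d : ℕ) (hd : 1 ≤ d) (Bc : (Fin d → ℂ) →L[ℂ] (Fin d → ℂ))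
    (hA : ∀ z ∈ spectrum ℂ Bc, ‖z‖ ≠ 1) :
    ∃ (P N : (Fin d → ℂ) →L[ℂ] (Fin d → ℂ)) (C r : ℝ), 0 ≤ C ∧ 0 ≤ r ∧ r < 1 ∧
      (∀ x, Bc (N x) = x - P x) ∧ (∀ x, P (N x) = 0) ∧
      (∀ (j : ℕ) (x : Fin d → ℂ), ‖(Bc ^ j) (P x)‖ ≤ C * r ^ j * ‖x‖) ∧
      (∀ (j : ℕ) (x : Fin d → ℂ), ‖(N ^ (j + 1)) x‖ ≤ C * r ^ (j + 1) * ‖x‖) := by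
  classical
  haveI : Nonempty (Fin d) := Fin.pos_iff_nonempty.mp hd
  set f : Module.End ℂ (Fin d → ℂ) := (Bc : (Fin d → ℂ) →ₗ[ℂ] (Fin d → ℂ)) with hf
  set G : ℂ → Submodule ℂ (Fin d → ℂ) := f.maxGenEigenspace with hG
  have hev_spec : ∀ μ : ℂ, f.HasEigenvalue μ → μ ∈ spectrum ℂ Bc := by
    intro μ hμ
    rw [← clm_end_spectrum_eq Bc]
    exact Module.End.hasEigenvalue_iff_mem_spectrum.mp hμ
  have hGbot : ∀ μ : ℂ, G μ ≠ ⊥ → f.HasEigenvalue μ := by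
    intro μ h
    rw [hG, Module.End.maxGenEigenspace_eq] at h
    exact Module.End.hasEigenvalue_of_hasGenEigenvalue h
  set s₀ : Finset ℂ := (Module.End.finite_hasEigenvalue f).toFinset with hs₀
  set s₁ : Finset ℂ := s₀.filter (fun μ => ‖μ‖ < 1) with hs₁
  set s₂ : Finset ℂ := s₀.filter (fun μ => 1 < ‖μ‖) with hs₂
  set S : Submodule ℂ (Fin d → ℂ) := s₁.sup G with hS
  set U : Submodule ℂ (Fin d → ℂ) := s₂.sup G with hU
  have htop : S ⊔ U = ⊤ := by
    refine le_antisymm le_top ?_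
    rw [← Module.End.iSup_maxGenEigenspace_eq_top f]
    refine iSup_le fun μ => ?_
    by_cases hbot : G μ = ⊥
    · rw [show f.maxGenEigenspace μ = G μ from rfl, hbot]
      exact bot_le
    · have hev := hGbot μ hbot
      have hμ0 : μ ∈ s₀ := by
        rw [hs₀, Set.Finite.mem_toFinset]
        exact hev
      have hne := hA μ (hev_spec μ hev)
      rcases lt_or_gt_of_ne hne with hlt | hgt
      · exact le_trans (Finset.le_sup (by rw [hs₁]; exact Finset.mem_filter.mpr ⟨hμ0, hlt⟩))
          le_sup_left
      · exact le_trans (Finset.le_sup (by rw [hs₂]; exact Finset.mem_filter.mpr ⟨hμ0, hgt⟩))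
          le_sup_right
  have hdisj : Disjoint S U := by
    refine disjoint_finsup f.independent_maxGenEigenspace s₁ s₂ ?_
    intro μ hμ1 hμ2
    rw [hs₁, Finset.mem_filter] at hμ1
    rw [hs₂, Finset.mem_filter] at hμ2
    linarith [hμ1.2, hμ2.2]
  have hcompl : IsCompl S U := ⟨hdisj, codisjoint_iff.mpr htop⟩
  -- invariance
  have hinv : ∀ (s : Finset ℂ), ∀ v ∈ s.sup G, Bc v ∈ s.sup G := by
    intro s v hv
    have hmap : Submodule.map (f : Module.End ℂ (Fin d → ℂ)) (s.sup G) ≤ s.sup G := by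
      refine Submodule.map_le_iff_le_comap.mpr ?_
      refine Finset.sup_le fun μ hμ => ?_
      intro w hw
      simp only [Submodule.mem_comap]
      exact Finset.le_sup (f := G) hμ
        (Module.End.mapsTo_maxGenEigenspace_of_comm (Commute.refl f) μ hw)
    exact hmap ⟨v, hv, rfl⟩
  have hSinv : ∀ v ∈ S, Bc v ∈ S := by rw [hS]; exact hinv s₁
  have hUinv : ∀ v ∈ U, Bc v ∈ U := by rw [hU]; exact hinv s₂
  -- eigenvector location facts
  have hE1 : ∀ (μ : ℂ) (v : Fin d → ℂ), v ∈ S → v ≠ 0 → Bc v = μ • v → ‖μ‖ < 1 := by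
    intro μ v hvS hv0 hvec
    by_contra hcon
    have hμs : μ ∉ s₁ := by
      rw [hs₁, Finset.mem_filter]
      rintro ⟨-, h⟩
      exact hcon h
    have hdis : Disjoint (G μ) S := by
      have h1 := f.independent_maxGenEigenspace.disjoint_biSup (y := (s₁ : Set ℂ))
        (by simpa using hμs)
      have h2 : Disjoint (G μ) (s₁.sup G) := by
        rw [Finset.sup_eq_iSup]
        simpa using h1
      rwa [← hS] at h2
    have hvG : v ∈ G μ := by
      have : v ∈ f.genEigenspace μ 1 := Module.End.mem_genEigenspace_one.mpr hvec
      exact (f.genEigenspace μ).monotone le_top this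
    exact hv0 (Submodule.disjoint_def.mp hdis v hvG hvS)
  have hE2 : ∀ (μ : ℂ) (v : Fin d → ℂ), v ∈ U → v ≠ 0 → Bc v = μ • v → 1 < ‖μ‖ := by
    intro μ v hvU hv0 hvec
    by_contra hcon
    have hμs : μ ∉ s₂ := by
      rw [hs₂, Finset.mem_filter]
      rintro ⟨-, h⟩
      exact hcon h
    have hdis : Disjoint (G μ) U := by
      have h1 := f.independent_maxGenEigenspace.disjoint_biSup (y := (s₂ : Set ℂ))
        (by simpa using hμs)
      have h2 : Disjoint (G μ) (s₂.sup G) := by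
        rw [Finset.sup_eq_iSup]
        simpa using h1
      rwa [← hU] at h2
    have hvG : v ∈ G μ := by
      have : v ∈ f.genEigenspace μ 1 := Module.End.mem_genEigenspace_one.mpr hvec
      exact (f.genEigenspace μ).monotone le_top this
    exact hv0 (Submodule.disjoint_def.mp hdis v hvG hvU)
  -- the projection onto S along U
  set Plin : (Fin d → ℂ) →ₗ[ℂ] (Fin d → ℂ) :=
    S.subtype ∘ₗ (S.linearProjOfIsCompl U hcompl) with hPlin
  set P : (Fin d → ℂ) →L[ℂ] (Fin d → ℂ) := LinearMap.toContinuousLinearMap Plin with hPdef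
  have hPapp : ∀ x, P x = ((S.linearProjOfIsCompl U hcompl) x : Fin d → ℂ) := fun x => rfl
  have hPmem : ∀ x, P x ∈ S := fun x => by rw [hPapp]; exact Submodule.coe_mem _
  have hPS : ∀ x ∈ S, P x = x := by
    intro x hx
    rw [hPapp]
    exact congrArg _ (Submodule.linearProjOfIsCompl_apply_left hcompl ⟨x, hx⟩)
  have hPU : ∀ x ∈ U, P x = 0 := by
    intro x hx
    rw [hPapp]
    exact congrArg Subtype.val (Submodule.linearProjOfIsCompl_apply_right' hcompl hx)
  have hQmem : ∀ x, x - P x ∈ U := by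
    intro x
    have hx : x ∈ S ⊔ U := by rw [htop]; exact Submodule.mem_top
    obtain ⟨sx, hsx, ux, hux, hsum⟩ := Submodule.mem_sup.mp hx
    have hPx : P x = sx := by
      rw [← hsum, map_add, hPS sx hsx, hPU ux hux, add_zero]
    rw [hPx, ← hsum]
    simpa using hux
  have hcomm : ∀ x, P (Bc x) = Bc (P x) := by
    intro x
    conv_lhs => rw [show x = P x + (x - P x) by abel]
    rw [map_add Bc, map_add P, hPS _ (hSinv _ (hPmem x)), hPU _ (hUinv _ (hQmem x)), add_zero]
  -- the operator M, acting as B on U and the identity on S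
  set M : (Fin d → ℂ) →L[ℂ] (Fin d → ℂ) := Bc * (1 - P) + P with hM
  have hMapp : ∀ x, M x = Bc (x - P x) + P x := by
    intro x
    simp [hM, ContinuousLinearMap.add_apply, ContinuousLinearMap.mul_apply,
      ContinuousLinearMap.sub_apply, ContinuousLinearMap.one_apply]
  have hMzero : ∀ x, M x = 0 → x = 0 := by
    intro x h0
    rw [hMapp] at h0
    have hsU : P x ∈ U := by
      have h2 : P x = -(Bc (x - P x)) := eq_neg_of_add_eq_zero_right h0
      rw [h2]
      exact neg_mem (hUinv _ (hQmem x))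
    have hs0 : P x = 0 := Submodule.disjoint_def.mp hdisj (P x) (hPmem x) hsU
    have hBu : Bc (x - P x) = 0 := by
      have h1 : Bc (x - P x) = -(P x) := eq_neg_of_add_eq_zero_left h0
      rw [h1, hs0, neg_zero]
    have hu0 : x - P x = 0 := by
      by_contra hne
      have := hE2 0 (x - P x) (hQmem x) hne (by rw [zero_smul]; exact hBu)
      norm_num at this
    linear_combination hs0 + hu0
  have Minj : Function.Injective M := by
    intro a b hab
    have := hMzero (a - b) (by rw [map_sub, hab, sub_self])
    exact sub_eq_zero.mp this
  have Msurj : Function.Surjective M :=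
    (LinearMap.injective_iff_surjective (f := (M : (Fin d → ℂ) →ₗ[ℂ] (Fin d → ℂ)))).mp Minj
  set Meq : (Fin d → ℂ) ≃ₗ[ℂ] (Fin d → ℂ) :=
    LinearEquiv.ofBijective (M : (Fin d → ℂ) →ₗ[ℂ] (Fin d → ℂ)) ⟨Minj, Msurj⟩ with hMeq
  set Minv : (Fin d → ℂ) →L[ℂ] (Fin d → ℂ) :=
    LinearMap.toContinuousLinearMap (Meq.symm : (Fin d → ℂ) →ₗ[ℂ] (Fin d → ℂ)) with hMinv
  have hMinv1 : ∀ x, M (Minv x) = x := fun x => Meq.apply_symm_apply x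
  have hMinv2 : ∀ x, Minv (M x) = x := fun x => Meq.symm_apply_apply x
  set N : (Fin d → ℂ) →L[ℂ] (Fin d → ℂ) := Minv * (1 - P) with hN
  have hNapp : ∀ x, N x = Minv (x - P x) := by
    intro x
    simp [hN, ContinuousLinearMap.mul_apply, ContinuousLinearMap.sub_apply,
      ContinuousLinearMap.one_apply]
  have hNU : ∀ x, N x ∈ U := by
    intro x
    have hy : M (N x) = x - P x := by rw [hNapp]; exact hMinv1 _
    have h1 : Bc (N x - P (N x)) + P (N x) = x - P x := by rw [← hMapp]; exact hy
    have hPy : P (N x) ∈ U := by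
      have h2 : P (N x) = (x - P x) - Bc (N x - P (N x)) :=
        eq_sub_of_add_eq (by rwa [add_comm] at h1)
      rw [h2]
      exact sub_mem (hQmem x) (hUinv _ (hQmem (N x)))
    have hPy0 : P (N x) = 0 := Submodule.disjoint_def.mp hdisj _ (hPmem (N x)) hPy
    have : N x = N x - P (N x) := by rw [hPy0, sub_zero]
    rw [this]
    exact hQmem (N x)
  have hPN : ∀ x, P (N x) = 0 := fun x => hPU _ (hNU x)
  have hBN : ∀ x, Bc (N x) = x - P x := by
    intro x
    have hy : M (N x) = x - P x := by rw [hNapp]; exact hMinv1 _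
    rw [hMapp, hPN, sub_zero, add_zero] at hy
    exact hy
  clear_value f G s₀ s₁ s₂ S U Plin P M Meq Minv N
  -- nontriviality of the operator algebra
  haveI : Nontrivial ((Fin d → ℂ) →L[ℂ] (Fin d → ℂ)) := by
    refine ⟨0, 1, fun h => ?_⟩
    obtain ⟨v, hv⟩ := exists_ne (0 : Fin d → ℂ)
    apply hv
    have := congrArg (fun T : (Fin d → ℂ) →L[ℂ] (Fin d → ℂ) => T v) h
    simpa using this.symm
  -- spectra of the two contraction operators
  have hT1spec : ∀ z ∈ spectrum ℂ (Bc * P), ‖z‖ < 1 := by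
    intro z hz
    obtain ⟨v, hv0, hveq⟩ := clm_spec_eigenvector _ hz
    rcases eq_or_ne z 0 with rfl | hz0
    · simp
    · have hveq' : Bc (P v) = z • v := hveq
      have hPv : P v = v := by
        have h1 : z • P v = z • v := by
          calc z • P v = P (z • v) := (map_smul P z v).symm
            _ = P (Bc (P v)) := by rw [hveq']
            _ = Bc (P (P v)) := hcomm (P v)
            _ = Bc (P v) := by rw [hPS _ (hPmem v)]
            _ = z • v := hveq'
        exact smul_right_injective _ hz0 h1
      have hvS : v ∈ S := hPv ▸ hPmem v
      exact hE1 z v hvS hv0 (by have h := hveq'; rw [hPv] at h; exact h)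
  have hT2spec : ∀ z ∈ spectrum ℂ N, ‖z‖ < 1 := by
    intro z hz
    obtain ⟨v, hv0, hveq⟩ := clm_spec_eigenvector _ hz
    rcases eq_or_ne z 0 with rfl | hz0
    · simp
    · have hvU : v ∈ U := by
        have : v = z⁻¹ • N v := by rw [hveq, inv_smul_smul₀ hz0]
        rw [this]
        exact Submodule.smul_mem _ _ (hNU v)
      have hPv : P v = 0 := hPU v hvU
      have hNv : Minv v = z • v := by
        rw [← hveq, hNapp, hPv, sub_zero]
      have hMv : v = z • M v := by
        conv_lhs => rw [← hMinv1 v, hNv, map_smul]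
      have hMvBc : M v = Bc v := by rw [hMapp, hPv, sub_zero, add_zero]
      have hBcv : Bc v = z⁻¹ • v := by
        rw [hMvBc] at hMv
        rw [eq_comm, inv_smul_eq_iff₀ hz0]
        exact hMv
      have h2 := hE2 z⁻¹ v hvU hv0 hBcv
      rw [norm_inv] at h2
      have hz' : 0 < ‖z‖ := norm_pos_iff.mpr hz0
      have h3 : ‖z‖ * ‖z‖⁻¹ = 1 := mul_inv_cancel₀ (ne_of_gt hz')
      nlinarith
  obtain ⟨C₁, r₁, hC₁, hr₁0, hr₁1, hb₁⟩ := geom_decay (Bc * P) hT1spec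
  obtain ⟨C₂, r₂, hC₂, hr₂0, hr₂1, hb₂⟩ := geom_decay N hT2spec
  set r : ℝ := max r₁ r₂ with hr
  set C : ℝ := max (C₁ * (‖P‖ + 1)) C₂ with hC
  have hr0 : 0 ≤ r := le_trans hr₁0.le (le_max_left _ _)
  have hr1 : r < 1 := max_lt hr₁1 hr₂1
  have hC0 : 0 ≤ C := le_trans (by linarith) (le_max_right _ _)
  have hBjP : ∀ (j : ℕ) (x : Fin d → ℂ),
      (Bc ^ j) (P x) = ((Bc * P) ^ j) (P x) ∧ ((Bc * P) ^ j) (P x) ∈ S := by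
    intro j x
    induction j with
    | zero => simp [hPmem]
    | succ j ih =>
      obtain ⟨ih1, ih2⟩ := ih
      have hy : P (((Bc * P) ^ j) (P x)) = ((Bc * P) ^ j) (P x) := hPS _ ih2
      constructor
      · rw [pow_succ', ContinuousLinearMap.mul_apply, ih1, pow_succ',
          ContinuousLinearMap.mul_apply, ContinuousLinearMap.mul_apply, hy]
      · rw [pow_succ', ContinuousLinearMap.mul_apply, ContinuousLinearMap.mul_apply, hy]
        exact hSinv _ ih2
  refine ⟨P, N, C, r, hC0, hr0, hr1, hBN, hPN, ?_, ?_⟩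
  · intro j x
    have e0 := (hBjP j x).1
    have e1 : ‖((Bc * P) ^ j) (P x)‖ ≤ ‖(Bc * P) ^ j‖ * ‖P x‖ :=
      ContinuousLinearMap.le_opNorm _ _
    have e2 : ‖P x‖ ≤ ‖P‖ * ‖x‖ := ContinuousLinearMap.le_opNorm _ _
    have e3 : ‖(Bc * P) ^ j‖ ≤ C₁ * r₁ ^ j := hb₁ j
    have e4 : r₁ ^ j ≤ r ^ j := pow_le_pow_left₀ hr₁0.le (le_max_left _ _) j
    have e5 : C₁ * ‖P‖ ≤ C := by
      refine le_trans ?_ (le_max_left _ _)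
      nlinarith [norm_nonneg P]
    rw [e0]
    calc ‖((Bc * P) ^ j) (P x)‖ ≤ ‖(Bc * P) ^ j‖ * ‖P x‖ := e1
      _ ≤ (C₁ * r₁ ^ j) * (‖P‖ * ‖x‖) := by
          apply mul_le_mul e3 e2 (norm_nonneg _)
          positivity
      _ = (C₁ * ‖P‖) * (r₁ ^ j * ‖x‖) := by ring
      _ ≤ C * (r ^ j * ‖x‖) := by
          apply mul_le_mul e5 _ _ hC0
          · exact mul_le_mul_of_nonneg_right e4 (norm_nonneg _)
          · positivity
      _ = C * r ^ j * ‖x‖ := by ring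
  · intro j x
    have e1 : ‖(N ^ (j + 1)) x‖ ≤ ‖N ^ (j + 1)‖ * ‖x‖ := ContinuousLinearMap.le_opNorm _ _
    have e3 : ‖N ^ (j + 1)‖ ≤ C₂ * r₂ ^ (j + 1) := hb₂ (j + 1)
    have e4 : r₂ ^ (j + 1) ≤ r ^ (j + 1) := pow_le_pow_left₀ hr₂0.le (le_max_right _ _) _
    have e5 : C₂ ≤ C := le_max_right _ _
    calc ‖(N ^ (j + 1)) x‖ ≤ ‖N ^ (j + 1)‖ * ‖x‖ := e1
      _ ≤ (C₂ * r₂ ^ (j + 1)) * ‖x‖ := mul_le_mul_of_nonneg_right e3 (norm_nonneg _)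
      _ ≤ (C * r ^ (j + 1)) * ‖x‖ := by
          apply mul_le_mul_of_nonneg_right _ (norm_nonneg _)
          apply mul_le_mul e5 e4 (by positivity) hC0
      _ = C * r ^ (j + 1) * ‖x‖ := rfl


/-- The forward products `𝒜(m,n) = A_{m-1} ⋯ A_n` for `m ≥ n ≥ 0`
(equal to the identity when `m ≤ n`). -/
noncomputable def calAN (d : ℕ) (A : ℕ → (Fin d → ℂ) →L[ℂ] (Fin d → ℂ)) (m n : ℕ) :
    (Fin d → ℂ) →L[ℂ] (Fin d → ℂ) :=
  (List.range (m - n)).foldl (fun B k => (A (n + k)).comp B)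
    (ContinuousLinearMap.id ℂ (Fin d → ℂ))


lemma calAN_zero (d : ℕ) (A : ℕ → (Fin d → ℂ) →L[ℂ] (Fin d → ℂ)) :
    calAN d A 0 0 = ContinuousLinearMap.id ℂ (Fin d → ℂ) := by
  simp [calAN]

lemma calAN_succ (d : ℕ) (A : ℕ → (Fin d → ℂ) →L[ℂ] (Fin d → ℂ)) (j : ℕ) :
    calAN d A (j + 1) 0 = (A j).comp (calAN d A j 0) := by
  simp [calAN, List.range_succ]

set_option maxHeartbeats 2000000

/-- Hyers–Ulam stability for periodic systems: if `(A_n)_{n≥0}` is `q`-periodic and the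
spectrum of `A_{q-1} ⋯ A_1 A_0` does not intersect the unit circle, then the system
`x_{n+1} = A_n x_n`, `n ≥ 0`, has the `ℓ^∞`-shadowing property. -/
theorem periodic_hyers_ulam
    (d q : ℕ) (hd : 1 ≤ d) (hq : 1 ≤ q)
    (A : ℕ → (Fin d → ℂ) →L[ℂ] (Fin d → ℂ))
    (hper : ∀ n : ℕ, A (n + q) = A n)
    (hA : ∀ z ∈ spectrum ℂ (calAN d A q 0), ‖z‖ ≠ 1) :
    ∀ ε : ℝ, 0 < ε → ∃ δ : ℝ, 0 < δ ∧ ∀ y : ℕ → (Fin d → ℂ),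
      (∀ n : ℕ, ‖y (n + 1) - A n (y n)‖ ≤ δ) →
      ∃ x : ℕ → (Fin d → ℂ), (∀ n : ℕ, x (n + 1) = A n (x n)) ∧
        ∀ n : ℕ, ‖x n - y n‖ ≤ ε := by
  intro ε hε
  set Φ : ℕ → (Fin d → ℂ) →L[ℂ] (Fin d → ℂ) := fun j => calAN d A j 0 with hΦ
  have hΦ0 : ∀ v, Φ 0 v = v := by
    intro v
    show calAN d A 0 0 v = v
    rw [calAN_zero]
    rfl
  have hΦsucc : ∀ j v, Φ (j + 1) v = A j (Φ j v) := by
    intro j v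
    show calAN d A (j + 1) 0 v = A j (calAN d A j 0 v)
    rw [calAN_succ]
    rfl
  set B : (Fin d → ℂ) →L[ℂ] (Fin d → ℂ) := calAN d A q 0 with hB
  have hperk : ∀ (k n : ℕ), A (n + k * q) = A n := by
    intro k
    induction k with
    | zero => intro n; simp
    | succ k ih =>
      intro n
      have h1 : n + (k + 1) * q = (n + k * q) + q := by ring
      rw [h1, hper, ih]
  obtain ⟨P, N, C, r, hC0, hr0, hr1, hBN, hPN, hs, hu⟩ := hyperbolic_package d hd B hA
  -- the constants
  set c : ℕ → ℝ := fun j => Nat.rec 0 (fun i ci => ‖A i‖ * ci + 1) j with hc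
  have hc0 : c 0 = 0 := rfl
  have hcs : ∀ j, c (j + 1) = ‖A j‖ * c j + 1 := fun j => rfl
  have hcnn : ∀ j, 0 ≤ c j := by
    intro j
    induction j with
    | zero => rw [hc0]
    | succ j ih =>
      rw [hcs]
      nlinarith [norm_nonneg (A j)]
  set Kc : ℝ := ∑ i ∈ Finset.range (q + 1), c i with hKc
  have hKcle : ∀ j, j ≤ q → c j ≤ Kc := by
    intro j hj
    exact Finset.single_le_sum (fun i _ => hcnn i) (Finset.mem_range.mpr (by omega))
  have hKcnn : 0 ≤ Kc := Finset.sum_nonneg fun i _ => hcnn i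
  set KΦ : ℝ := ∑ i ∈ Finset.range (q + 1), ‖Φ i‖ with hKΦ
  have hKΦle : ∀ j, j ≤ q → ‖Φ j‖ ≤ KΦ := by
    intro j hj
    exact Finset.single_le_sum (fun i _ => norm_nonneg _) (Finset.mem_range.mpr (by omega))
  have hKΦnn : 0 ≤ KΦ := Finset.sum_nonneg fun i _ => norm_nonneg _
  have hL0 : 0 ≤ 2 * C / (1 - r) := div_nonneg (by linarith) (by linarith)
  set D : ℝ := KΦ * (2 * C / (1 - r) * Kc) + Kc with hD
  have hD0 : 0 ≤ D := by positivity
  set δ : ℝ := ε / (D + 1) with hδ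
  have hδpos : 0 < δ := div_pos hε (by linarith)
  refine ⟨δ, hδpos, ?_⟩
  intro y hy
  -- drift of the pseudo-orbit over a block
  have hdrift : ∀ (k j : ℕ), ‖y (k * q + j) - Φ j (y (k * q))‖ ≤ δ * c j := by
    intro k j
    induction j with
    | zero =>
      rw [hΦ0, Nat.add_zero, sub_self, norm_zero, hc0, mul_zero]
    | succ j ih =>
      have hA' : A (k * q + j) = A j := by
        rw [show k * q + j = j + k * q by ring, hperk]
      have hidx : k * q + (j + 1) = (k * q + j) + 1 := by ring
      have hstep : y (k * q + (j + 1)) - Φ (j + 1) (y (k * q))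
          = (y ((k * q + j) + 1) - A (k * q + j) (y (k * q + j)))
            + A j (y (k * q + j) - Φ j (y (k * q))) := by
        rw [hidx, hΦsucc, hA', map_sub]
        abel
      calc ‖y (k * q + (j + 1)) - Φ (j + 1) (y (k * q))‖
          ≤ ‖y ((k * q + j) + 1) - A (k * q + j) (y (k * q + j))‖
            + ‖A j (y (k * q + j) - Φ j (y (k * q)))‖ := by rw [hstep]; exact norm_add_le _ _
        _ ≤ δ + ‖A j‖ * (δ * c j) := by
            refine add_le_add (hy _) ?_
            refine le_trans (ContinuousLinearMap.le_opNorm _ _) ?_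
            exact mul_le_mul_of_nonneg_left ih (norm_nonneg _)
        _ = δ * c (j + 1) := by rw [hcs]; ring
  -- the induced pseudo-orbit of B
  set z : ℕ → (Fin d → ℂ) := fun m => y (m * q) with hz
  set Gs : ℕ → (Fin d → ℂ) := fun m => z (m + 1) - B (z m) with hGs
  have hGb : ∀ m, ‖Gs m‖ ≤ δ * Kc := by
    intro m
    have h1 : (m + 1) * q = m * q + q := by ring
    have h2 := hdrift m q
    have h3 : Gs m = y (m * q + q) - Φ q (y (m * q)) := by
      rw [hGs]
      simp only [hz, h1]
      rfl
    rw [h3]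
    exact le_trans h2 (mul_le_mul_of_nonneg_left (hKcle q le_rfl) hδpos.le)
  obtain ⟨e, herec, hebnd⟩ :=
    shadow_core B P N hBN hPN C r hC0 hr0 hr1 hs hu (δ * Kc) Gs hGb
  set w : ℕ → (Fin d → ℂ) := fun m => z m + e m with hw
  have hwrec : ∀ m, w (m + 1) = B (w m) := by
    intro m
    simp only [hw]
    rw [herec, hGs, map_add]
    show z (m + 1) + (B (e m) - (z (m + 1) - B (z m))) = B (z m) + B (e m)
    abel
  -- the true orbit
  set x : ℕ → (Fin d → ℂ) := fun n => Nat.rec (w 0) (fun n xn => A n xn) n with hx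
  have hxrec : ∀ n, x (n + 1) = A n (x n) := fun n => rfl
  have hxblock : ∀ (k j : ℕ), x (k * q + j) = Φ j (x (k * q)) := by
    intro k j
    induction j with
    | zero => rw [hΦ0, Nat.add_zero]
    | succ j ih =>
      have hA' : A (k * q + j) = A j := by
        rw [show k * q + j = j + k * q by ring, hperk]
      have hidx : k * q + (j + 1) = (k * q + j) + 1 := by ring
      rw [hidx, hxrec, hA', ih, hΦsucc]
  have hxmul : ∀ m, x (m * q) = w m := by
    intro m
    induction m with
    | zero =>
      rw [Nat.zero_mul]
      rfl
    | succ m ih =>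
      have h1 : (m + 1) * q = m * q + q := by ring
      rw [h1, hxblock, ih, hwrec]
  refine ⟨x, hxrec, ?_⟩
  intro n
  have hn := Nat.div_add_mod n q
  set m : ℕ := n / q with hm
  set ρ : ℕ := n % q with hρ
  have hρq : ρ < q := Nat.mod_lt _ (by omega)
  have hneq : n = m * q + ρ := by rw [mul_comm m q]; omega
  have h1 : x n = Φ ρ (w m) := by
    rw [show x n = x (m * q + ρ) from congrArg x hneq, hxblock, hxmul]
  have h2 : ‖y n - Φ ρ (z m)‖ ≤ δ * c ρ := by
    rw [show y n = y (m * q + ρ) from congrArg y hneq]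
    exact hdrift m ρ
  have h3 : ‖w m - z m‖ ≤ 2 * C / (1 - r) * (δ * Kc) := by
    have : w m - z m = e m := by
      show z m + e m - z m = e m
      abel
    rw [this]
    exact hebnd m
  calc ‖x n - y n‖ = ‖(Φ ρ (w m) - Φ ρ (z m)) + (Φ ρ (z m) - y n)‖ := by rw [h1]; congr 1; abel
    _ ≤ ‖Φ ρ (w m) - Φ ρ (z m)‖ + ‖Φ ρ (z m) - y n‖ := norm_add_le _ _
    _ ≤ ‖Φ ρ‖ * ‖w m - z m‖ + δ * c ρ := by
        refine add_le_add ?_ ?_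
        · rw [← map_sub]
          exact ContinuousLinearMap.le_opNorm _ _
        · rw [norm_sub_rev]
          exact h2
    _ ≤ KΦ * (2 * C / (1 - r) * (δ * Kc)) + δ * Kc := by
        refine add_le_add ?_ (mul_le_mul_of_nonneg_left (hKcle ρ hρq.le) hδpos.le)
        exact mul_le_mul (hKΦle ρ hρq.le) h3 (norm_nonneg _) hKΦnn
    _ = δ * D := by rw [hD]; ring
    _ ≤ δ * (D + 1) := by nlinarith
    _ = ε := by
        rw [hδ]
        field_simp
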